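/- arXiv:2103.01160 — 2 statements merged into one kernel-verified Lean document; each statement's English description precedes it below -/
import Mathlib

section
/- The 1-Wasserstein distance between two probability measures on ℝ with finite first moments equals the L¹ distance between their cumulative distribution functions: W₁(μ₁, μ₂) = ∫_ℝ |F₁(x) − F₂(x)| dx. -/
open MeasureTheory Set Filter Topology ProbabilityTheory
open scoped ENNReal

noncomputable def wQ (μ : Measure ℝ) (u : ℝ) : ℝ :=
  if 0 < u ∧ u < 1 then sInf {x | u ≤ cdf μ x} else 0

lemma wQ_le_iff (μ : Measure ℝ) [IsProbabilityMeasure μ] {u : ℝ}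
    (hu : u ∈ Ioo (0:ℝ) 1) (t : ℝ) : wQ μ u ≤ t ↔ u ≤ cdf μ t := by
  obtain ⟨hu0, hu1⟩ := hu
  have hQ : wQ μ u = sInf {x | u ≤ cdf μ x} := if_pos ⟨hu0, hu1⟩
  set S := {x | u ≤ cdf μ x} with hS
  have hne : S.Nonempty := by
    have h := (tendsto_cdf_atTop μ).eventually_const_lt hu1
    obtain ⟨x, hx⟩ := h.exists
    exact ⟨x, hx.le⟩
  have hbdd : BddBelow S := by
    have h := (tendsto_cdf_atBot μ).eventually_lt_const hu0
    obtain ⟨y, hy⟩ := h.exists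
    refine ⟨y, fun x hx => ?_⟩
    by_contra hxy
    push_neg at hxy
    exact absurd (hx.trans (monotone_cdf μ hxy.le)) (not_le.mpr hy)
  have hmem : u ≤ cdf μ (sInf S) := by
    have hrc : ContinuousWithinAt (cdf μ) (Ici (sInf S)) (sInf S) :=
      (cdf μ).right_continuous (sInf S)
    have hten : Tendsto (cdf μ) (𝓝[>] (sInf S)) (𝓝 (cdf μ (sInf S))) :=
      hrc.tendsto.mono_left (nhdsWithin_mono _ Ioi_subset_Ici_self)
    refine ge_of_tendsto hten ?_
    filter_upwards [self_mem_nhdsWithin] with x hx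
    obtain ⟨s, hsS, hsx⟩ := (csInf_lt_iff hbdd hne).mp hx
    exact hsS.trans (monotone_cdf μ hsx.le)
  rw [hQ]
  constructor
  · intro h
    exact hmem.trans (monotone_cdf μ h)
  · intro h
    exact csInf_le hbdd h

lemma measurable_wQ (μ : Measure ℝ) [IsProbabilityMeasure μ] : Measurable (wQ μ) := by
  apply measurable_of_Iic
  intro t
  by_cases h0 : (0:ℝ) ≤ t
  · have : wQ μ ⁻¹' Iic t = (Ioo 0 1 ∩ Iic (cdf μ t)) ∪ (Ioo (0:ℝ) 1)ᶜ := by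
      ext u
      by_cases hu : u ∈ Ioo (0:ℝ) 1
      · simp [hu, mem_preimage, mem_Iic, wQ_le_iff μ hu t]
      · have : wQ μ u = 0 := if_neg (by simpa [mem_Ioo] using hu)
        simp [hu, mem_preimage, mem_Iic, this, h0]
    rw [this]
    exact ((measurableSet_Ioo.inter measurableSet_Iic).union measurableSet_Ioo.compl)
  · have : wQ μ ⁻¹' Iic t = Ioo 0 1 ∩ Iic (cdf μ t) := by
      ext u
      by_cases hu : u ∈ Ioo (0:ℝ) 1
      · simp [hu, mem_preimage, mem_Iic, wQ_le_iff μ hu t]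
      · have : wQ μ u = 0 := if_neg (by simpa [mem_Ioo] using hu)
        simp [hu, mem_preimage, mem_Iic, this, h0]
    rw [this]
    exact measurableSet_Ioo.inter measurableSet_Iic

lemma vol_Ioo_inter_Iic {c : ℝ} (h0 : 0 ≤ c) (h1 : c ≤ 1) :
    volume (Ioo (0:ℝ) 1 ∩ Iic c) = ENNReal.ofReal c := by
  rcases lt_or_ge c 1 with h | h
  · have : Ioo (0:ℝ) 1 ∩ Iic c = Ioc 0 c := by
      ext x
      constructor
      · rintro ⟨⟨hx0, _⟩, hxc⟩; exact ⟨hx0, hxc⟩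
      · rintro ⟨hx0, hxc⟩; exact ⟨⟨hx0, lt_of_le_of_lt hxc h⟩, hxc⟩
    rw [this, Real.volume_Ioc, sub_zero]
  · have hc : c = 1 := le_antisymm h1 h
    have : Ioo (0:ℝ) 1 ∩ Iic c = Ioo 0 1 := by
      rw [hc]
      ext x
      constructor
      · rintro ⟨hx, _⟩; exact hx
      · intro hx; exact ⟨hx, hx.2.le⟩
    rw [this, Real.volume_Ioo, hc]
    norm_num

lemma map_wQ (μ : Measure ℝ) [IsProbabilityMeasure μ] :
    Measure.map (wQ μ) (volume.restrict (Ioo 0 1)) = μ := by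
  have hQm := measurable_wQ μ
  have hfin : IsFiniteMeasure (Measure.map (wQ μ) (volume.restrict (Ioo 0 1))) := by
    constructor
    rw [Measure.map_apply hQm MeasurableSet.univ]
    simp [Measure.restrict_apply, Real.volume_Ioo]
  refine Measure.ext_of_Iic _ _ (fun t => ?_)
  rw [Measure.map_apply hQm measurableSet_Iic, Measure.restrict_apply (hQm measurableSet_Iic)]
  have heq : wQ μ ⁻¹' Iic t ∩ Ioo 0 1 = Ioo (0:ℝ) 1 ∩ Iic (cdf μ t) := by
    ext u
    constructor
    · rintro ⟨hu1, hu2⟩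
      exact ⟨hu2, (wQ_le_iff μ hu2 t).mp hu1⟩
    · rintro ⟨hu1, hu2⟩
      exact ⟨(wQ_le_iff μ hu1 t).mpr hu2, hu1⟩
  rw [heq, vol_Ioo_inter_Iic (cdf_nonneg μ t) (cdf_le_one μ t), ofReal_cdf]

lemma xor_set_eq (a b : ℝ) :
    {t : ℝ | (a ≤ t) ≠ (b ≤ t)} = Ico (min a b) (max a b) := by
  have key : ∀ x y : ℝ, x ≤ y → {t : ℝ | (x ≤ t) ≠ (y ≤ t)} = Ico x y := by
    intro x y hxy
    ext t
    simp only [mem_setOf_eq, ne_eq, eq_iff_iff, mem_Ico]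
    constructor
    · intro hne
      by_cases hx : x ≤ t
      · have hy : ¬ y ≤ t := fun hy => hne (iff_of_true hx hy)
        exact ⟨hx, lt_of_not_ge hy⟩
      · have hy : ¬ y ≤ t := fun hy => hx (hxy.trans hy)
        exact absurd (iff_of_false hx hy) hne
    · rintro ⟨hx, hy⟩ hiff
      exact absurd (hiff.mp hx) (not_le.mpr hy)
  rcases le_total a b with h | h
  · rw [min_eq_left h, max_eq_right h, key a b h]
  · rw [min_eq_right h, max_eq_left h, ← key b a h]
    ext t
    simp only [mem_setOf_eq, ne_eq, eq_iff_iff]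
    tauto

lemma ofReal_abs_eq_lintegral (a b : ℝ) :
    ENNReal.ofReal |a - b| =
      ∫⁻ t, ({t : ℝ | (a ≤ t) ≠ (b ≤ t)}).indicator (fun _ => (1:ℝ≥0∞)) t := by
  rw [xor_set_eq, lintegral_indicator measurableSet_Ico, setLIntegral_one, Real.volume_Ico,
    max_sub_min_eq_abs, abs_sub_comm]

lemma xor_set_diff_union {α : Type*} (P Q : α → Prop) :
    {x | P x ≠ Q x} = ({x | P x} \ {x | Q x}) ∪ ({x | Q x} \ {x | P x}) := by
  ext x
  simp only [mem_setOf_eq, ne_eq, eq_iff_iff, mem_union, mem_diff, mem_setOf_eq]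
  tauto

lemma measurableSet_xor {α : Type*} [MeasurableSpace α] {P Q : α → Prop}
    (hP : MeasurableSet {x | P x}) (hQ : MeasurableSet {x | Q x}) :
    MeasurableSet {x | P x ≠ Q x} := by
  rw [xor_set_diff_union]
  exact (hP.diff hQ).union (hQ.diff hP)

lemma cost_lower_bound (μ₁ μ₂ : Measure ℝ) [IsProbabilityMeasure μ₁] [IsProbabilityMeasure μ₂]
    (γ : Measure (ℝ × ℝ)) (hγ1 : γ.map Prod.fst = μ₁) (hγ2 : γ.map Prod.snd = μ₂) :
    ∫⁻ t, ENNReal.ofReal |cdf μ₁ t - cdf μ₂ t| ≤ ∫⁻ q, ENNReal.ofReal |q.1 - q.2| ∂γ := by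
  haveI : IsFiniteMeasure γ := by
    constructor
    have : γ univ = μ₁ univ := by
      rw [← hγ1, Measure.map_apply measurable_fst MeasurableSet.univ, preimage_univ]
    rw [this, measure_univ]
    exact ENNReal.one_lt_top
  have hE : MeasurableSet {p : (ℝ × ℝ) × ℝ | (p.1.1 ≤ p.2) ≠ (p.1.2 ≤ p.2)} :=
    measurableSet_xor (measurableSet_le (measurable_fst.fst) measurable_snd)
      (measurableSet_le (measurable_fst.snd) measurable_snd)
  have hslice : ∀ t : ℝ, MeasurableSet {q : ℝ × ℝ | (q.1 ≤ t) ≠ (q.2 ≤ t)} := fun t =>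
    measurableSet_xor (measurableSet_le measurable_fst measurable_const)
      (measurableSet_le measurable_snd measurable_const)
  have hcost : ∫⁻ q, ENNReal.ofReal |q.1 - q.2| ∂γ =
      ∫⁻ t, γ {q : ℝ × ℝ | (q.1 ≤ t) ≠ (q.2 ≤ t)} := by
    calc ∫⁻ q, ENNReal.ofReal |q.1 - q.2| ∂γ
        = ∫⁻ q, ∫⁻ t, ({p : (ℝ × ℝ) × ℝ | (p.1.1 ≤ p.2) ≠ (p.1.2 ≤ p.2)}).indicator
            (fun _ => (1:ℝ≥0∞)) (q, t) ∂volume ∂γ := by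
          refine lintegral_congr fun q => ?_
          rw [ofReal_abs_eq_lintegral]
          rfl
      _ = ∫⁻ t, ∫⁻ q, ({p : (ℝ × ℝ) × ℝ | (p.1.1 ≤ p.2) ≠ (p.1.2 ≤ p.2)}).indicator
            (fun _ => (1:ℝ≥0∞)) (q, t) ∂γ := by
          refine lintegral_lintegral_swap ?_
          exact (measurable_const.indicator hE).aemeasurable
      _ = ∫⁻ t, γ {q : ℝ × ℝ | (q.1 ≤ t) ≠ (q.2 ≤ t)} := by
          refine lintegral_congr fun t => ?_
          have : (fun q : ℝ × ℝ => ({p : (ℝ × ℝ) × ℝ | (p.1.1 ≤ p.2) ≠ (p.1.2 ≤ p.2)}).indicator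
              (fun _ => (1:ℝ≥0∞)) (q, t)) =
              ({q : ℝ × ℝ | (q.1 ≤ t) ≠ (q.2 ≤ t)}).indicator (fun _ => (1:ℝ≥0∞)) := by
            funext q
            simp only [Set.indicator_apply, mem_setOf_eq]
          rw [this, lintegral_indicator (hslice t), setLIntegral_one]
  rw [hcost]
  refine lintegral_mono fun t => ?_
  set A := {q : ℝ × ℝ | q.1 ≤ t} with hAdef
  set B := {q : ℝ × ℝ | q.2 ≤ t} with hBdef
  have hgA : γ A = μ₁ (Iic t) := by
    rw [← hγ1, Measure.map_apply measurable_fst measurableSet_Iic]; rfl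
  have hgB : γ B = μ₂ (Iic t) := by
    rw [← hγ2, Measure.map_apply measurable_snd measurableSet_Iic]; rfl
  have key : ∀ S T : Set (ℝ × ℝ), γ S - γ T ≤ γ ((S \ T) ∪ (T \ S)) := by
    intro S T
    rw [tsub_le_iff_right]
    calc γ S ≤ γ ((S \ T) ∪ T) := measure_mono (subset_diff_union S T)
      _ ≤ γ (S \ T) + γ T := measure_union_le _ _
      _ ≤ γ ((S \ T) ∪ (T \ S)) + γ T := add_le_add_left (measure_mono subset_union_left) _
  have k2 : γ B - γ A ≤ γ ((A \ B) ∪ (B \ A)) := by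
    rw [union_comm]; exact key B A
  have hsub : {q : ℝ × ℝ | (q.1 ≤ t) ≠ (q.2 ≤ t)} = (A \ B) ∪ (B \ A) :=
    xor_set_diff_union _ _
  rw [hsub]
  calc ENNReal.ofReal |cdf μ₁ t - cdf μ₂ t|
      = max (ENNReal.ofReal (cdf μ₁ t) - ENNReal.ofReal (cdf μ₂ t))
          (ENNReal.ofReal (cdf μ₂ t) - ENNReal.ofReal (cdf μ₁ t)) := by
        have hmax : ∀ x y : ℝ, ENNReal.ofReal (max x y) =
            max (ENNReal.ofReal x) (ENNReal.ofReal y) := by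
          intro x y
          rcases le_total x y with h | h
          · rw [max_eq_right h, max_eq_right (ENNReal.ofReal_le_ofReal h)]
          · rw [max_eq_left h, max_eq_left (ENNReal.ofReal_le_ofReal h)]
        rw [abs_eq_max_neg, neg_sub, hmax,
          ENNReal.ofReal_sub _ (cdf_nonneg μ₂ t), ENNReal.ofReal_sub _ (cdf_nonneg μ₁ t)]
    _ = max (γ A - γ B) (γ B - γ A) := by
        rw [ofReal_cdf, ofReal_cdf, hgA, hgB]
    _ ≤ γ ((A \ B) ∪ (B \ A)) := max_le (key A B) k2

lemma xor_set_eq' (a b : ℝ) :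
    {u : ℝ | (u ≤ a) ≠ (u ≤ b)} = Ioc (min a b) (max a b) := by
  have key : ∀ x y : ℝ, x ≤ y → {u : ℝ | (u ≤ x) ≠ (u ≤ y)} = Ioc x y := by
    intro x y hxy
    ext u
    simp only [mem_setOf_eq, ne_eq, eq_iff_iff, mem_Ioc]
    constructor
    · intro hne
      by_cases hx : u ≤ x
      · exact absurd (iff_of_true hx (hx.trans hxy)) hne
      · have hy : u ≤ y := by
          by_contra hy
          exact hne (iff_of_false hx hy)
        exact ⟨lt_of_not_ge hx, hy⟩
    · rintro ⟨hx, hy⟩ hiff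
      exact absurd (hiff.mpr hy) (not_le.mpr hx)
  rcases le_total a b with h | h
  · rw [min_eq_left h, max_eq_right h, key a b h]
  · rw [min_eq_right h, max_eq_left h, ← key b a h]
    ext u
    simp only [mem_setOf_eq, ne_eq, eq_iff_iff]
    tauto

lemma vol_Ioo_inter_Ioc {m M : ℝ} (h0 : 0 ≤ m) (h1 : M ≤ 1) :
    volume (Ioo (0:ℝ) 1 ∩ Ioc m M) = ENNReal.ofReal (M - m) := by
  rcases le_or_gt M m with h | h
  · rw [Ioc_eq_empty (not_lt.mpr h), inter_empty, measure_empty,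
      ENNReal.ofReal_of_nonpos (by linarith)]
  · rcases lt_or_ge M 1 with hM | hM
    · have : Ioo (0:ℝ) 1 ∩ Ioc m M = Ioc m M := by
        ext x
        constructor
        · rintro ⟨_, hx⟩; exact hx
        · rintro ⟨hx1, hx2⟩
          exact ⟨⟨lt_of_le_of_lt h0 hx1, lt_of_le_of_lt hx2 hM⟩, hx1, hx2⟩
      rw [this, Real.volume_Ioc]
    · have hM1 : M = 1 := le_antisymm h1 hM
      subst hM1
      have : Ioo (0:ℝ) 1 ∩ Ioc m 1 = Ioo m 1 := by
        ext x
        constructor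
        · rintro ⟨⟨_, hx1⟩, hxm, _⟩; exact ⟨hxm, hx1⟩
        · rintro ⟨hxm, hx1⟩
          exact ⟨⟨lt_of_le_of_lt h0 hxm, hx1⟩, hxm, hx1.le⟩
      rw [this, Real.volume_Ioo]

lemma cost_witness (μ₁ μ₂ : Measure ℝ) [IsProbabilityMeasure μ₁] [IsProbabilityMeasure μ₂] :
    ∫⁻ u in Ioo (0:ℝ) 1, ENNReal.ofReal |wQ μ₁ u - wQ μ₂ u| =
      ∫⁻ t, ENNReal.ofReal |cdf μ₁ t - cdf μ₂ t| := by
  have hQ₁ := measurable_wQ μ₁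
  have hQ₂ := measurable_wQ μ₂
  have hE : MeasurableSet {p : ℝ × ℝ | (wQ μ₁ p.1 ≤ p.2) ≠ (wQ μ₂ p.1 ≤ p.2)} :=
    measurableSet_xor (measurableSet_le (hQ₁.comp measurable_fst) measurable_snd)
      (measurableSet_le (hQ₂.comp measurable_fst) measurable_snd)
  calc ∫⁻ u in Ioo (0:ℝ) 1, ENNReal.ofReal |wQ μ₁ u - wQ μ₂ u|
      = ∫⁻ u in Ioo (0:ℝ) 1, ∫⁻ t, ({p : ℝ × ℝ | (wQ μ₁ p.1 ≤ p.2) ≠ (wQ μ₂ p.1 ≤ p.2)}).indicator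
          (fun _ => (1:ℝ≥0∞)) (u, t) ∂volume := by
        refine lintegral_congr fun u => ?_
        rw [ofReal_abs_eq_lintegral]
        rfl
    _ = ∫⁻ t, ∫⁻ u in Ioo (0:ℝ) 1,
          ({p : ℝ × ℝ | (wQ μ₁ p.1 ≤ p.2) ≠ (wQ μ₂ p.1 ≤ p.2)}).indicator
          (fun _ => (1:ℝ≥0∞)) (u, t) := by
        refine lintegral_lintegral_swap ?_
        exact (measurable_const.indicator hE).aemeasurable
    _ = ∫⁻ t, ENNReal.ofReal |cdf μ₁ t - cdf μ₂ t| := by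
        refine lintegral_congr fun t => ?_
        have hfn : (fun u : ℝ => ({p : ℝ × ℝ | (wQ μ₁ p.1 ≤ p.2) ≠ (wQ μ₂ p.1 ≤ p.2)}).indicator
            (fun _ => (1:ℝ≥0∞)) (u, t)) =
            ({u : ℝ | (wQ μ₁ u ≤ t) ≠ (wQ μ₂ u ≤ t)}).indicator (fun _ => (1:ℝ≥0∞)) := by
          funext u
          simp only [Set.indicator_apply, mem_setOf_eq]
        have hS : MeasurableSet {u : ℝ | (wQ μ₁ u ≤ t) ≠ (wQ μ₂ u ≤ t)} :=
          measurableSet_xor (measurableSet_le hQ₁ measurable_const)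
            (measurableSet_le hQ₂ measurable_const)
        rw [hfn, lintegral_indicator hS, setLIntegral_one, Measure.restrict_apply hS]
        have hset : {u : ℝ | (wQ μ₁ u ≤ t) ≠ (wQ μ₂ u ≤ t)} ∩ Ioo 0 1 =
            Ioo (0:ℝ) 1 ∩ Ioc (min (cdf μ₁ t) (cdf μ₂ t)) (max (cdf μ₁ t) (cdf μ₂ t)) := by
          ext u
          simp only [mem_inter_iff, mem_setOf_eq, ← xor_set_eq', mem_setOf_eq]
          constructor
          · rintro ⟨hx, hu⟩
            refine ⟨hu, ?_⟩
            rw [← wQ_le_iff μ₁ hu t, ← wQ_le_iff μ₂ hu t]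
            exact hx
          · rintro ⟨hu, hx⟩
            refine ⟨?_, hu⟩
            rw [wQ_le_iff μ₁ hu t, wQ_le_iff μ₂ hu t]
            exact hx
        rw [hset, vol_Ioo_inter_Ioc (le_min (cdf_nonneg μ₁ t) (cdf_nonneg μ₂ t))
          (max_le (cdf_le_one μ₁ t) (cdf_le_one μ₂ t)), max_sub_min_eq_abs, abs_sub_comm]

/-- The 1-Wasserstein distance between two probability measures on `ℝ` with finite
first moments equals the `L¹` distance between their CDFs. -/
theorem wasserstein_one_eq_cdf_L1
    (μ₁ μ₂ : Measure ℝ) [IsProbabilityMeasure μ₁] [IsProbabilityMeasure μ₂]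
    (h₁ : Integrable (fun x : ℝ => x) μ₁) (h₂ : Integrable (fun x : ℝ => x) μ₂)
    (F₁ F₂ : ℝ → ℝ)
    (hF₁ : ∀ x, F₁ x = (μ₁ (Iic x)).toReal)
    (hF₂ : ∀ x, F₂ x = (μ₂ (Iic x)).toReal) :
    sInf { c : ℝ≥0∞ | ∃ γ : Measure (ℝ × ℝ),
        γ.map Prod.fst = μ₁ ∧ γ.map Prod.snd = μ₂ ∧
        c = ∫⁻ q, ENNReal.ofReal |q.1 - q.2| ∂γ } =
      ENNReal.ofReal (∫ x, |F₁ x - F₂ x|) := by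
  have hQ₁ := measurable_wQ μ₁
  have hQ₂ := measurable_wQ μ₂
  have hF₁' : F₁ = fun x => cdf μ₁ x := funext fun x => by rw [hF₁, cdf_eq_real, measureReal_def]
  have hF₂' : F₂ = fun x => cdf μ₂ x := funext fun x => by rw [hF₂, cdf_eq_real, measureReal_def]
  set V := ∫⁻ t, ENNReal.ofReal |cdf μ₁ t - cdf μ₂ t| with hVdef
  -- the monotone coupling
  set γ₀ := Measure.map (fun u => (wQ μ₁ u, wQ μ₂ u)) (volume.restrict (Ioo 0 1)) with hγ₀
  have hpair : Measurable fun u => (wQ μ₁ u, wQ μ₂ u) := hQ₁.prodMk hQ₂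
  have hmarg1 : γ₀.map Prod.fst = μ₁ := by
    rw [hγ₀, Measure.map_map measurable_fst hpair]
    exact map_wQ μ₁
  have hmarg2 : γ₀.map Prod.snd = μ₂ := by
    rw [hγ₀, Measure.map_map measurable_snd hpair]
    exact map_wQ μ₂
  have hcost_meas : Measurable fun q : ℝ × ℝ => ENNReal.ofReal |q.1 - q.2| :=
    ((measurable_fst.sub measurable_snd).abs).ennreal_ofReal
  have hcost₀ : ∫⁻ q, ENNReal.ofReal |q.1 - q.2| ∂γ₀ = V := by
    rw [hγ₀, lintegral_map hcost_meas hpair]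
    exact cost_witness μ₁ μ₂
  -- finiteness of V
  have habs : ∀ i : Measure ℝ, ∀ _ : IsProbabilityMeasure i,
      ∫⁻ u in Ioo (0:ℝ) 1, ENNReal.ofReal |wQ i u| = ∫⁻ x, ENNReal.ofReal |x| ∂i := by
    intro i hi
    conv_rhs => rw [← map_wQ i]
    rw [lintegral_map measurable_abs.ennreal_ofReal (measurable_wQ i)]
  have hVfin : V ≠ ⊤ := by
    have hb : V ≤ (∫⁻ x, ENNReal.ofReal |x| ∂μ₁) + ∫⁻ x, ENNReal.ofReal |x| ∂μ₂ := by
      rw [← hcost₀, hγ₀, lintegral_map hcost_meas hpair]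
      calc ∫⁻ u in Ioo (0:ℝ) 1, ENNReal.ofReal |wQ μ₁ u - wQ μ₂ u|
          ≤ ∫⁻ u in Ioo (0:ℝ) 1, (ENNReal.ofReal |wQ μ₁ u| + ENNReal.ofReal |wQ μ₂ u|) := by
            refine lintegral_mono fun u => ?_
            rw [← ENNReal.ofReal_add (abs_nonneg _) (abs_nonneg _)]
            exact ENNReal.ofReal_le_ofReal (abs_sub _ _)
        _ = (∫⁻ u in Ioo (0:ℝ) 1, ENNReal.ofReal |wQ μ₁ u|)
            + ∫⁻ u in Ioo (0:ℝ) 1, ENNReal.ofReal |wQ μ₂ u| :=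
            lintegral_add_left (hQ₁.abs.ennreal_ofReal) _
        _ = (∫⁻ x, ENNReal.ofReal |x| ∂μ₁) + ∫⁻ x, ENNReal.ofReal |x| ∂μ₂ := by
            rw [habs μ₁ inferInstance, habs μ₂ inferInstance]
    refine ne_top_of_le_ne_top ?_ hb
    have hfin1 : ∫⁻ x, ENNReal.ofReal |x| ∂μ₁ < ⊤ := by
      have := h₁.hasFiniteIntegral
      rw [hasFiniteIntegral_iff_norm] at this
      simpa [Real.norm_eq_abs] using this
    have hfin2 : ∫⁻ x, ENNReal.ofReal |x| ∂μ₂ < ⊤ := by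
      have := h₂.hasFiniteIntegral
      rw [hasFiniteIntegral_iff_norm] at this
      simpa [Real.norm_eq_abs] using this
    exact (ENNReal.add_lt_top.mpr ⟨hfin1, hfin2⟩).ne
  -- rewrite RHS
  have hRHS : ENNReal.ofReal (∫ x, |F₁ x - F₂ x|) = V := by
    have hmeas : AEStronglyMeasurable (fun x => |cdf μ₁ x - cdf μ₂ x|) volume :=
      (((monotone_cdf μ₁).measurable.sub (monotone_cdf μ₂).measurable).abs).aestronglyMeasurable
    rw [hF₁', hF₂']
    rw [integral_eq_lintegral_of_nonneg_ae (ae_of_all _ fun x => abs_nonneg _) hmeas]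
    exact ENNReal.ofReal_toReal hVfin
  rw [hRHS]
  refine le_antisymm ?_ ?_
  · exact sInf_le ⟨γ₀, hmarg1, hmarg2, hcost₀.symm⟩
  · refine le_sInf ?_
    rintro c ⟨γ, hg1, hg2, rfl⟩
    exact cost_lower_bound μ₁ μ₂ γ hg1 hg2
end

section
/- For one-dimensional Gaussian measures μ₁ = N(m₁, σ₁²) and μ₂ = N(m₂, σ₂²), the 2-Wasserstein distance satisfies W₂(μ₁, μ₂)² = (m₁ − m₂)² + (σ₁ − σ₂)². -/
open MeasureTheory ProbabilityTheory
open scoped ENNReal NNReal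

section WassersteinAux

open MeasureTheory ProbabilityTheory Real Filter Set
open scoped ENNReal NNReal Topology

lemma integrable_sq_mul_gauss : Integrable (fun x : ℝ => x ^ 2 * rexp (-(2⁻¹) * x ^ 2)) := by
  have h := integrable_rpow_mul_exp_neg_mul_sq (b := 2⁻¹) (by norm_num) (s := 2) (by norm_num)
  have : ∀ x : ℝ, x ^ (2:ℝ) = x ^ (2:ℕ) := fun x => by
    rw [← Real.rpow_natCast x 2]; norm_num
  simpa [this] using h

lemma integrable_id_mul_gauss : Integrable (fun x : ℝ => x * rexp (-(2⁻¹) * x ^ 2)) :=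
  integrable_mul_exp_neg_mul_sq (by norm_num)

lemma integrable_gauss : Integrable (fun x : ℝ => rexp (-(2⁻¹) * x ^ 2)) :=
  integrable_exp_neg_mul_sq (by norm_num)

lemma tendsto_gauss_top : Tendsto (fun x : ℝ => x * rexp (-(2⁻¹) * x ^ 2)) atTop (𝓝 0) := by
  have h := rpow_mul_exp_neg_mul_sq_isLittleO_exp_neg (b := 2⁻¹) (by norm_num) 1
  simp only [Real.rpow_one] at h
  have h2 : Tendsto (fun x : ℝ => rexp (-(1/2) * x)) atTop (𝓝 0) := by
    have hm : Tendsto (fun x : ℝ => (1/2) * x) atTop atTop :=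
      tendsto_id.const_mul_atTop (by norm_num)
    simpa [neg_mul, Function.comp_def] using tendsto_exp_neg_atTop_nhds_zero.comp hm
  exact h.isBigO.trans_tendsto h2

lemma tendsto_gauss_bot : Tendsto (fun x : ℝ => x * rexp (-(2⁻¹) * x ^ 2)) atBot (𝓝 0) := by
  have h : Tendsto (fun x : ℝ => -(-x * rexp (-(2⁻¹) * (-x) ^ 2))) atBot (𝓝 (-0)) :=
    ((tendsto_gauss_top.comp tendsto_neg_atBot_atTop)).neg
  rw [neg_zero] at h
  refine h.congr fun x => by ring_nf

lemma exp_gauss_tendsto_top : Tendsto (fun x : ℝ => rexp (-(2⁻¹) * x ^ 2)) atTop (𝓝 0) := by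
  have h : Tendsto (fun x : ℝ => 2⁻¹ * x ^ 2) atTop atTop :=
    (tendsto_pow_atTop two_ne_zero).const_mul_atTop (by norm_num)
  simpa [neg_mul, Function.comp_def] using tendsto_exp_neg_atTop_nhds_zero.comp h

lemma exp_gauss_tendsto_bot : Tendsto (fun x : ℝ => rexp (-(2⁻¹) * x ^ 2)) atBot (𝓝 0) := by
  have h := exp_gauss_tendsto_top.comp tendsto_neg_atBot_atTop
  simpa [Function.comp_def] using h

lemma integral_id_mul_gauss : ∫ x : ℝ, x * rexp (-(2⁻¹) * x ^ 2) = 0 := by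
  have hderiv : ∀ x : ℝ, HasDerivAt (fun y : ℝ => -rexp (-(2⁻¹) * y ^ 2))
      (x * rexp (-(2⁻¹) * x ^ 2)) x := by
    intro x
    have h1 : HasDerivAt (fun y : ℝ => -(2⁻¹ : ℝ) * y ^ 2) (-(2⁻¹) * (2 * x ^ 1)) x :=
      (hasDerivAt_pow 2 x).const_mul (-(2⁻¹ : ℝ))
    have h2 := h1.exp.neg
    refine h2.congr_deriv ?_
    simp [Real.exp_neg]
    ring
  have h := integral_of_hasDerivAt_of_tendsto hderiv integrable_id_mul_gauss
    (exp_gauss_tendsto_bot.neg.congr' (by simp)) (exp_gauss_tendsto_top.neg.congr' (by simp))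
  simpa using h

lemma integral_sq_mul_gauss : ∫ x : ℝ, x ^ 2 * rexp (-(2⁻¹) * x ^ 2) = Real.sqrt (2 * π) := by
  have hderiv : ∀ x : ℝ, HasDerivAt (fun y : ℝ => -(y * rexp (-(2⁻¹) * y ^ 2)))
      (x ^ 2 * rexp (-(2⁻¹) * x ^ 2) - rexp (-(2⁻¹) * x ^ 2)) x := by
    intro x
    have h1 : HasDerivAt (fun y : ℝ => -(2⁻¹ : ℝ) * y ^ 2) (-(2⁻¹) * (2 * x ^ 1)) x :=
      (hasDerivAt_pow 2 x).const_mul (-(2⁻¹ : ℝ))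
    have h2 := ((hasDerivAt_id x).mul h1.exp).neg
    refine h2.congr_deriv ?_
    simp
    ring
  have hint : Integrable fun x : ℝ =>
      x ^ 2 * rexp (-(2⁻¹) * x ^ 2) - rexp (-(2⁻¹) * x ^ 2) :=
    integrable_sq_mul_gauss.sub integrable_gauss
  have h := integral_of_hasDerivAt_of_tendsto hderiv hint
    (tendsto_gauss_bot.neg) (tendsto_gauss_top.neg)
  rw [neg_zero, sub_zero] at h
  have h2 := integral_sub integrable_sq_mul_gauss integrable_gauss
  rw [h2] at h
  have hg : ∫ x : ℝ, rexp (-(2⁻¹) * x ^ 2) = Real.sqrt (2 * π) := by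
    have h3 := integral_gaussian (2⁻¹ : ℝ)
    rw [show π / (2⁻¹ : ℝ) = 2 * π by ring] at h3
    simpa using h3
  rw [hg] at h
  linarith

lemma gpdf01 (x : ℝ) : gaussianPDFReal 0 1 x = (√(2 * π))⁻¹ * rexp (-(2⁻¹) * x ^ 2) := by
  simp only [gaussianPDFReal, NNReal.coe_one, mul_one, sub_zero]
  ring_nf

lemma gaussianReal01_eq :
    gaussianReal 0 1 = volume.withDensity (fun x => ((gaussianPDFReal 0 1 x).toNNReal : ℝ≥0∞)) := by
  rw [gaussianReal_of_var_ne_zero 0 one_ne_zero]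
  rfl

lemma meas_toNN : Measurable (fun x => (gaussianPDFReal 0 1 x).toNNReal) :=
  (measurable_gaussianPDFReal 0 1).real_toNNReal

lemma integral_g01 (f : ℝ → ℝ) :
    ∫ x, f x ∂(gaussianReal 0 1) = ∫ x, f x * gaussianPDFReal 0 1 x := by
  rw [gaussianReal01_eq, integral_withDensity_eq_integral_smul meas_toNN]
  congr 1
  ext x
  rw [NNReal.smul_def, smul_eq_mul, Real.coe_toNNReal _ (gaussianPDFReal_nonneg 0 1 x), mul_comm]

lemma integrable_g01_iff (f : ℝ → ℝ) :
    Integrable f (gaussianReal 0 1) ↔ Integrable (fun x => f x * gaussianPDFReal 0 1 x) := by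
  rw [gaussianReal01_eq, integrable_withDensity_iff_integrable_smul meas_toNN]
  constructor <;> intro h <;> refine h.congr (ae_of_all _ fun x => ?_) <;>
    simp only [NNReal.smul_def, smul_eq_mul,
      Real.coe_toNNReal _ (gaussianPDFReal_nonneg 0 1 x), mul_comm]

lemma integrable_id_g01 : Integrable (fun x => x) (gaussianReal 0 1) := by
  rw [integrable_g01_iff]
  refine (integrable_id_mul_gauss.const_mul ((√(2 * π))⁻¹)).congr (ae_of_all _ fun x => ?_)
  simp only [gpdf01]; ring

lemma integrable_sq_g01 : Integrable (fun x => x ^ 2) (gaussianReal 0 1) := by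
  rw [integrable_g01_iff]
  refine (integrable_sq_mul_gauss.const_mul ((√(2 * π))⁻¹)).congr (ae_of_all _ fun x => ?_)
  simp only [gpdf01]; ring

lemma integral_id_g01 : ∫ x, x ∂(gaussianReal 0 1) = 0 := by
  rw [integral_g01]
  simp_rw [gpdf01]
  rw [show (fun x : ℝ => x * ((√(2 * π))⁻¹ * rexp (-(2⁻¹) * x ^ 2)))
      = fun x : ℝ => (√(2 * π))⁻¹ * (x * rexp (-(2⁻¹) * x ^ 2)) by ext x; ring]
  rw [integral_const_mul, integral_id_mul_gauss, mul_zero]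

lemma integral_sq_g01 : ∫ x, x ^ 2 ∂(gaussianReal 0 1) = 1 := by
  rw [integral_g01]
  rw [show (fun x : ℝ => x ^ 2 * gaussianPDFReal 0 1 x)
      = fun x : ℝ => (√(2 * π))⁻¹ * (x ^ 2 * rexp (-(2⁻¹) * x ^ 2)) by
    ext x; simp only [gpdf01]; ring]
  rw [integral_const_mul, integral_sq_mul_gauss, inv_mul_cancel₀]
  positivity

lemma nnreal_sq_coe (σ : ℝ≥0) : (⟨(σ:ℝ)^2, sq_nonneg _⟩ : ℝ≥0) = σ ^ 2 := by
  ext; exact (NNReal.coe_pow σ 2).symm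

lemma map_affine (m : ℝ) (σ : ℝ≥0) :
    (gaussianReal 0 1).map (fun x => m + (σ:ℝ) * x) = gaussianReal m (σ ^ 2) := by
  have h2 : (fun x : ℝ => m + (σ:ℝ) * x) = (· + m) ∘ (fun x => (σ:ℝ) * x) := by
    ext x; simp [add_comm]
  rw [h2, ← Measure.map_map (measurable_add_const m) (measurable_const_mul _)]
  have h3 : (gaussianReal 0 1).map (fun x => (σ:ℝ) * x) = gaussianReal 0 (σ ^ 2) := by
    have := gaussianReal_map_const_mul (μ := 0) (v := 1) (σ:ℝ)
    rw [mul_zero, mul_one] at this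
    convert this using 2
    exact (nnreal_sq_coe σ).symm
  rw [h3, gaussianReal_map_add_const, zero_add]

lemma integrable_affine_comp_g01 (a b : ℝ) :
    Integrable (fun x => a + b * x) (gaussianReal 0 1) :=
  (integrable_const a).add (integrable_id_g01.const_mul b)

lemma integrable_affine_sq_g01 (a b : ℝ) :
    Integrable (fun x => (a + b * x) ^ 2) (gaussianReal 0 1) := by
  have h : Integrable (fun x : ℝ => a ^ 2 + 2 * a * b * x + b ^ 2 * x ^ 2) (gaussianReal 0 1) :=
    ((integrable_const (a ^ 2)).add (integrable_id_g01.const_mul (2 * a * b))).add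
      (integrable_sq_g01.const_mul (b ^ 2))
  exact h.congr (ae_of_all _ fun x => by ring)

lemma integral_affine_sq_g01 (a b : ℝ) :
    ∫ x, (a + b * x) ^ 2 ∂(gaussianReal 0 1) = a ^ 2 + b ^ 2 := by
  have h : ∫ x, (a + b * x) ^ 2 ∂(gaussianReal 0 1)
      = ∫ x, a ^ 2 + 2 * a * b * x + b ^ 2 * x ^ 2 ∂(gaussianReal 0 1) :=
    integral_congr_ae (ae_of_all _ fun x => by ring)
  have i1 : Integrable (fun x : ℝ => a ^ 2 + 2 * a * b * x) (gaussianReal 0 1) :=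
    integrable_affine_comp_g01 (a ^ 2) (2 * a * b)
  rw [h, integral_add i1 (integrable_sq_g01.const_mul (b ^ 2)),
    integral_add (integrable_const (a ^ 2)) (integrable_id_g01.const_mul (2 * a * b)),
    integral_const_mul, integral_const_mul, integral_id_g01, integral_sq_g01]
  simp

lemma integrable_id_gauss (m : ℝ) (σ : ℝ≥0) :
    Integrable (fun x => x) (gaussianReal m (σ ^ 2)) := by
  rw [← map_affine m σ,
    integrable_map_measure (g := fun x : ℝ => x) measurable_id.aestronglyMeasurable
      (by fun_prop : Measurable fun x : ℝ => m + (σ:ℝ) * x).aemeasurable]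
  exact integrable_affine_comp_g01 m σ

lemma integrable_sq_gauss (m : ℝ) (σ : ℝ≥0) :
    Integrable (fun x => x ^ 2) (gaussianReal m (σ ^ 2)) := by
  rw [← map_affine m σ,
    integrable_map_measure (g := fun x : ℝ => x ^ 2)
      (by fun_prop : Measurable fun x : ℝ => x ^ 2).aestronglyMeasurable
      (by fun_prop : Measurable fun x : ℝ => m + (σ:ℝ) * x).aemeasurable]
  exact integrable_affine_sq_g01 m σ

lemma integral_id_gauss (m : ℝ) (σ : ℝ≥0) :
    ∫ x, x ∂(gaussianReal m (σ ^ 2)) = m := by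
  rw [← map_affine m σ, integral_map (f := fun x : ℝ => x)
    (by fun_prop : Measurable fun x : ℝ => m + (σ:ℝ) * x).aemeasurable
    measurable_id.aestronglyMeasurable]
  have h : ∫ x, m + (σ:ℝ) * x ∂(gaussianReal 0 1)
      = m + (σ:ℝ) * ∫ x, x ∂(gaussianReal 0 1) := by
    rw [integral_add (integrable_const m) (integrable_id_g01.const_mul _), integral_const,
      integral_const_mul]
    simp
  rw [h, integral_id_g01, mul_zero, add_zero]

lemma integral_centered_sq_gauss (m : ℝ) (σ : ℝ≥0) :
    ∫ x, (x - m) ^ 2 ∂(gaussianReal m (σ ^ 2)) = (σ:ℝ) ^ 2 := by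
  rw [← map_affine m σ, integral_map (f := fun x : ℝ => (x - m) ^ 2)
    (by fun_prop : Measurable fun x : ℝ => m + (σ:ℝ) * x).aemeasurable
    (by fun_prop : Measurable fun x : ℝ => (x - m) ^ 2).aestronglyMeasurable]
  have h : ∀ x : ℝ, (m + (σ:ℝ) * x - m) ^ 2 = (0 + (σ:ℝ) * x) ^ 2 := fun x => by ring
  simp_rw [h]
  rw [integral_affine_sq_g01 0 (σ:ℝ)]
  ring

lemma lintegral_cost_aux (a b : ℝ) :
    ∫⁻ x, ENNReal.ofReal ((a + b * x) ^ 2) ∂(gaussianReal 0 1)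
      = ENNReal.ofReal (a ^ 2 + b ^ 2) := by
  rw [← ofReal_integral_eq_lintegral_ofReal (integrable_affine_sq_g01 a b)
    (ae_of_all _ fun x => sq_nonneg _), integral_affine_sq_g01]

lemma integrable_centered_sq_gauss (m : ℝ) (σ : ℝ≥0) :
    Integrable (fun x => (x - m) ^ 2) (gaussianReal m (σ ^ 2)) := by
  have h := ((integrable_sq_gauss m σ).add
    ((integrable_id_gauss m σ).const_mul (-2 * m))).add (integrable_const (m ^ 2))
  exact h.congr (ae_of_all _ fun x => by simp; ring)

lemma integral_centered_gauss (m : ℝ) (σ : ℝ≥0) :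
    ∫ x, (x - m) ∂(gaussianReal m (σ ^ 2)) = 0 := by
  rw [integral_sub (integrable_id_gauss m σ) (integrable_const m), integral_id_gauss,
    integral_const]
  simp

lemma integrable_centered_gauss (m : ℝ) (σ : ℝ≥0) :
    Integrable (fun x => x - m) (gaussianReal m (σ ^ 2)) :=
  (integrable_id_gauss m σ).sub (integrable_const m)

lemma lower_bound (m₁ m₂ : ℝ) (σ₁ σ₂ : ℝ≥0) (γ : Measure (ℝ × ℝ))
    (h1 : γ.map Prod.fst = gaussianReal m₁ (σ₁ ^ 2))
    (h2 : γ.map Prod.snd = gaussianReal m₂ (σ₂ ^ 2)) :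
    ENNReal.ofReal ((m₁ - m₂) ^ 2 + ((σ₁ : ℝ) - (σ₂ : ℝ)) ^ 2)
      ≤ ∫⁻ q, ENNReal.ofReal ((q.1 - q.2) ^ 2) ∂γ := by
  by_cases hfin : ∫⁻ q, ENNReal.ofReal ((q.1 - q.2) ^ 2) ∂γ = ⊤
  · simp [hfin]
  -- transfer tools
  have hkey : ∀ (φ : ℝ × ℝ → ℝ), Measurable φ → ∀ (ν : Measure ℝ), γ.map φ = ν →
      ∀ (f : ℝ → ℝ), Measurable f →
      (Integrable f ν → Integrable (fun q => f (φ q)) γ) ∧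
      (∫ q, f (φ q) ∂γ = ∫ x, f x ∂ν) := by
    intro φ hφ ν hν f hf
    subst hν
    exact ⟨fun h => (integrable_map_measure hf.aestronglyMeasurable hφ.aemeasurable).mp h,
      (integral_map hφ.aemeasurable hf.aestronglyMeasurable).symm⟩
  have iF : Integrable (fun q : ℝ × ℝ => q.1 - m₁) γ :=
    (hkey _ measurable_fst _ h1 (fun x => x - m₁) (by fun_prop)).1
      (integrable_centered_gauss m₁ σ₁)
  have iG : Integrable (fun q : ℝ × ℝ => q.2 - m₂) γ :=
    (hkey _ measurable_snd _ h2 (fun x => x - m₂) (by fun_prop)).1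
      (integrable_centered_gauss m₂ σ₂)
  have iF2 : Integrable (fun q : ℝ × ℝ => (q.1 - m₁) ^ 2) γ :=
    (hkey _ measurable_fst _ h1 (fun x => (x - m₁) ^ 2) (by fun_prop)).1
      (integrable_centered_sq_gauss m₁ σ₁)
  have iG2 : Integrable (fun q : ℝ × ℝ => (q.2 - m₂) ^ 2) γ :=
    (hkey _ measurable_snd _ h2 (fun x => (x - m₂) ^ 2) (by fun_prop)).1
      (integrable_centered_sq_gauss m₂ σ₂)
  have hF : ∫ q, (q.1 - m₁) ∂γ = 0 := by
    rw [(hkey _ measurable_fst _ h1 (fun x => x - m₁) (by fun_prop)).2,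
      integral_centered_gauss]
  have hG : ∫ q, (q.2 - m₂) ∂γ = 0 := by
    rw [(hkey _ measurable_snd _ h2 (fun x => x - m₂) (by fun_prop)).2,
      integral_centered_gauss]
  have hF2 : ∫ q, (q.1 - m₁) ^ 2 ∂γ = (σ₁ : ℝ) ^ 2 := by
    rw [(hkey _ measurable_fst _ h1 (fun x => (x - m₁) ^ 2) (by fun_prop)).2,
      integral_centered_sq_gauss]
  have hG2 : ∫ q, (q.2 - m₂) ^ 2 ∂γ = (σ₂ : ℝ) ^ 2 := by
    rw [(hkey _ measurable_snd _ h2 (fun x => (x - m₂) ^ 2) (by fun_prop)).2,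
      integral_centered_sq_gauss]
  -- integrability of the cost
  have hnn : ∀ t : ℝ, 0 ≤ t → (‖t‖₊ : ℝ≥0∞) = ENNReal.ofReal t := fun t ht => by
    rw [← enorm_eq_nnnorm, ← ofReal_norm, Real.norm_of_nonneg ht]
  have iC : Integrable (fun q : ℝ × ℝ => (q.1 - q.2) ^ 2) γ := by
    refine ⟨(by fun_prop : Measurable fun q : ℝ × ℝ => (q.1 - q.2) ^ 2).aestronglyMeasurable, ?_⟩
    rw [hasFiniteIntegral_iff_ofReal (ae_of_all _ fun q => sq_nonneg _)]
    exact lt_top_iff_ne_top.mpr hfin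
  -- integrability of the product
  have iFG : Integrable (fun q : ℝ × ℝ => (q.1 - m₁) * (q.2 - m₂)) γ := by
    refine Integrable.mono' ((iF2.add iG2).const_mul (2⁻¹ : ℝ))
      ((by fun_prop : Measurable fun q : ℝ × ℝ => (q.1 - m₁) * (q.2 - m₂)).aestronglyMeasurable)
      (ae_of_all _ fun q => ?_)
    rw [Real.norm_eq_abs, abs_mul]
    simp only [Pi.add_apply]
    nlinarith [sq_nonneg (|q.1 - m₁| - |q.2 - m₂|), sq_abs (q.1 - m₁), sq_abs (q.2 - m₂),
      abs_nonneg (q.1 - m₁), abs_nonneg (q.2 - m₂)]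
  -- Cauchy-Schwarz
  have hCS : ∫ q, (q.1 - m₁) * (q.2 - m₂) ∂γ ≤ (σ₁ : ℝ) * σ₂ := by
    have hmemF : MemLp (fun q : ℝ × ℝ => q.1 - m₁) (ENNReal.ofReal 2) γ := by
      rw [show ENNReal.ofReal 2 = 2 by norm_num]
      exact (memLp_two_iff_integrable_sq
        ((by fun_prop : Measurable fun q : ℝ × ℝ => q.1 - m₁).aestronglyMeasurable)).mpr iF2
    have hmemG : MemLp (fun q : ℝ × ℝ => q.2 - m₂) (ENNReal.ofReal 2) γ := by
      rw [show ENNReal.ofReal 2 = 2 by norm_num]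
      exact (memLp_two_iff_integrable_sq
        ((by fun_prop : Measurable fun q : ℝ × ℝ => q.2 - m₂).aestronglyMeasurable)).mpr iG2
    have h := integral_mul_norm_le_Lp_mul_Lq
      (Real.HolderConjugate.two_two : (2:ℝ).HolderConjugate 2) hmemF hmemG
    have hrw : ∀ t : ℝ, ‖t‖ ^ (2:ℝ) = t ^ 2 := fun t => by
      rw [show (2:ℝ) = ((2:ℕ):ℝ) by norm_num, Real.rpow_natCast, Real.norm_eq_abs, sq_abs]
    simp_rw [hrw] at h
    rw [hF2, hG2] at h
    have hsq : ∀ σ : ℝ≥0, ((σ:ℝ) ^ 2) ^ ((1:ℝ)/2) = (σ:ℝ) := fun σ => by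
      rw [show ((σ:ℝ) ^ 2) = (σ:ℝ) ^ ((2:ℕ):ℝ) by rw [Real.rpow_natCast],
        ← Real.rpow_mul σ.coe_nonneg]
      norm_num
    rw [hsq σ₁, hsq σ₂] at h
    calc ∫ q, (q.1 - m₁) * (q.2 - m₂) ∂γ
        ≤ ‖∫ q, (q.1 - m₁) * (q.2 - m₂) ∂γ‖ := le_abs_self _
      _ ≤ ∫ q, ‖(q.1 - m₁) * (q.2 - m₂)‖ ∂γ := norm_integral_le_integral_norm _
      _ = ∫ q, ‖q.1 - m₁‖ * ‖q.2 - m₂‖ ∂γ := by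
          congr 1; ext q; rw [norm_mul]
      _ ≤ (σ₁ : ℝ) * σ₂ := h
  haveI : IsProbabilityMeasure γ := by
    constructor
    have := congrArg (fun ν : Measure ℝ => ν Set.univ) h1
    simpa [Measure.map_apply measurable_fst MeasurableSet.univ] using this
  -- expansion of the cost
  have expand : ∫ q, (q.1 - q.2) ^ 2 ∂γ
      = (σ₁:ℝ) ^ 2 + (σ₂:ℝ) ^ 2 + (m₁ - m₂) ^ 2
        - 2 * ∫ q, (q.1 - m₁) * (q.2 - m₂) ∂γ := by
    have hpt : (fun q : ℝ × ℝ => (q.1 - q.2) ^ 2)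
        = fun q : ℝ × ℝ => (((q.1 - m₁) ^ 2 + (q.2 - m₂) ^ 2) + ((m₁ - m₂) ^ 2
          + (2 * (m₁ - m₂)) * (q.1 - m₁)))
          - ((2 * (m₁ - m₂)) * (q.2 - m₂) + 2 * ((q.1 - m₁) * (q.2 - m₂))) := by
      ext q; ring
    have j1 : Integrable (fun q : ℝ × ℝ => (q.1 - m₁) ^ 2 + (q.2 - m₂) ^ 2) γ := iF2.add iG2
    have j2 : Integrable (fun q : ℝ × ℝ => (m₁ - m₂) ^ 2 + (2 * (m₁ - m₂)) * (q.1 - m₁)) γ :=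
      (integrable_const ((m₁ - m₂) ^ 2)).add (iF.const_mul _)
    have j3 : Integrable (fun q : ℝ × ℝ => ((q.1 - m₁) ^ 2 + (q.2 - m₂) ^ 2) + ((m₁ - m₂) ^ 2
        + (2 * (m₁ - m₂)) * (q.1 - m₁))) γ := j1.add j2
    have j4 : Integrable (fun q : ℝ × ℝ => (2 * (m₁ - m₂)) * (q.2 - m₂)
        + 2 * ((q.1 - m₁) * (q.2 - m₂))) γ := (iG.const_mul _).add (iFG.const_mul 2)
    rw [hpt, integral_sub j3 j4, integral_add j1 j2, integral_add iF2 iG2,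
      integral_add (integrable_const ((m₁ - m₂) ^ 2)) (iF.const_mul _),
      integral_add (iG.const_mul _) (iFG.const_mul 2),
      integral_const_mul, integral_const_mul, integral_const_mul,
      hF, hG, hF2, hG2, integral_const]
    simp only [measure_univ, probReal_univ, ENNReal.toReal_one, smul_eq_mul, one_mul]
    ring
  rw [← ofReal_integral_eq_lintegral_ofReal iC (ae_of_all _ fun q => sq_nonneg _)]
  refine ENNReal.ofReal_le_ofReal ?_
  rw [expand]
  nlinarith [hCS]

end WassersteinAux

/-- For one-dimensional Gaussians `μ₁ = N(m₁, σ₁²)` and `μ₂ = N(m₂, σ₂²)`, the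
squared 2-Wasserstein distance equals `(m₁ − m₂)² + (σ₁ − σ₂)²`. -/
theorem wasserstein_two_gaussian
    (m₁ m₂ : ℝ) (σ₁ σ₂ : ℝ≥0) :
    sInf { c : ℝ≥0∞ | ∃ γ : Measure (ℝ × ℝ),
        γ.map Prod.fst = gaussianReal m₁ (σ₁ ^ 2) ∧
        γ.map Prod.snd = gaussianReal m₂ (σ₂ ^ 2) ∧
        c = ∫⁻ q, ENNReal.ofReal (|q.1 - q.2| ^ 2) ∂γ } =
      ENNReal.ofReal ((m₁ - m₂) ^ 2 + ((σ₁ : ℝ) - (σ₂ : ℝ)) ^ 2) := by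
  apply le_antisymm
  · have hTm : Measurable (fun x : ℝ => (m₁ + (σ₁:ℝ) * x, m₂ + (σ₂:ℝ) * x)) := by fun_prop
    refine sInf_le ⟨(gaussianReal 0 1).map (fun x => (m₁ + (σ₁:ℝ) * x, m₂ + (σ₂:ℝ) * x)),
      ?_, ?_, ?_⟩
    · rw [Measure.map_map measurable_fst hTm]
      exact map_affine m₁ σ₁
    · rw [Measure.map_map measurable_snd hTm]
      exact map_affine m₂ σ₂
    · rw [lintegral_map ((by fun_prop : Measurable fun q : ℝ × ℝ =>
        |q.1 - q.2| ^ 2).ennreal_ofReal) hTm]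
      have hpt : ∀ x : ℝ, ENNReal.ofReal (|(m₁ + (σ₁:ℝ) * x) - (m₂ + (σ₂:ℝ) * x)| ^ 2)
          = ENNReal.ofReal (((m₁ - m₂) + ((σ₁:ℝ) - (σ₂:ℝ)) * x) ^ 2) := fun x => by
        rw [sq_abs]
        congr 1
        ring
      simp_rw [hpt]
      rw [lintegral_cost_aux]
  · refine le_sInf fun c hc => ?_
    obtain ⟨γ, h1, h2, rfl⟩ := hc
    have hpt : ∀ q : ℝ × ℝ, ENNReal.ofReal (|q.1 - q.2| ^ 2)
        = ENNReal.ofReal ((q.1 - q.2) ^ 2) := fun q => by rw [sq_abs]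
    simp_rw [hpt]
    exact lower_bound m₁ m₂ σ₁ σ₂ γ h1 h2
end
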